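/- For ν ∈ [0,1], a positive operator A, and a unit vector x with ⟨x, A x⟩ ≠ 0, setting r = min{ν, 1−ν}, we have 1 − ⟨x, A x⟩^{−ν} ⟨x, A^ν x⟩ ≥ r (1 − ⟨x, A x⟩^{−1/2} ⟨x, A^{1/2} x⟩)². This refines the Hölder–McCarthy inequality ⟨x, A x⟩^ν ≥ ⟨x, A^ν x⟩. -/

import Mathlib

open scoped InnerProductSpace NNReal

set_option maxHeartbeats 1000000 in
private lemma rhm_cont_aux (y : ℝ) (hy : 0 ≤ y) :
    Continuous (fun t : ℝ => ((Real.toNNReal t ^ y : ℝ≥0) : ℝ)) :=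
  NNReal.continuous_coe.comp ((NNReal.continuous_rpow_const hy).comp continuous_real_toNNReal)

private lemma rhm_key_scalar {ν u : ℝ} (h0 : 0 ≤ ν) (h1 : ν ≤ 1) (hu : 0 ≤ u) :
    u ^ ν ≤ (ν - min ν (1-ν)) * u + (1 - ν - min ν (1-ν)) + (2 * min ν (1-ν)) * u ^ ((1:ℝ)/2) := by
  rcases le_total ν (1-ν) with h | h
  · rw [min_eq_left h]
    have key := Real.geom_mean_le_arith_mean2_weighted (w₁ := 2*ν) (w₂ := 1 - 2*ν)
      (p₁ := u ^ ((1:ℝ)/2)) (p₂ := 1) (by linarith) (by linarith)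
      (Real.rpow_nonneg hu _) zero_le_one (by ring)
    have e1 : (u ^ ((1:ℝ)/2)) ^ (2*ν) = u ^ ν := by
      rw [← Real.rpow_mul hu]; congr 1; ring
    rw [e1, Real.one_rpow, mul_one] at key
    linarith
  · rw [min_eq_right h]
    have hν2 : (1:ℝ)/2 ≤ ν := by linarith
    have key := Real.geom_mean_le_arith_mean2_weighted (w₁ := 2*ν - 1) (w₂ := 2 - 2*ν)
      (p₁ := u) (p₂ := u ^ ((1:ℝ)/2)) (by linarith) (by linarith)
      hu (Real.rpow_nonneg hu _) (by ring)
    have e1 : u ^ (2*ν - 1) * (u ^ ((1:ℝ)/2)) ^ (2 - 2*ν) = u ^ ν := by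
      rw [← Real.rpow_mul hu, ← Real.rpow_add' hu (by norm_num; linarith)]
      ring_nf
    rw [e1] at key
    linarith

private lemma rhm_key_scalar2 {ν a t : ℝ} (h0 : 0 ≤ ν) (h1 : ν ≤ 1) (ha : 0 < a) (ht : 0 ≤ t) :
    t ^ ν ≤ ((ν - min ν (1-ν)) * a ^ (ν-1)) * t + ((1 - ν - min ν (1-ν)) * a ^ ν)
      + ((2 * min ν (1-ν)) * a ^ (ν - (1:ℝ)/2)) * t ^ ((1:ℝ)/2) := by
  have key := rhm_key_scalar h0 h1 (div_nonneg ht ha.le) (u := t/a)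
  have haν : (0:ℝ) < a ^ ν := Real.rpow_pos_of_pos ha ν
  have hmul := mul_le_mul_of_nonneg_left key haν.le
  have e0 : a ^ ν * (t/a) ^ ν = t ^ ν := by
    rw [Real.div_rpow ht ha.le, mul_div_cancel₀]
    exact (Real.rpow_pos_of_pos ha ν).ne'
  have e1 : a ^ ν * ((ν - min ν (1-ν)) * (t/a)) = ((ν - min ν (1-ν)) * a ^ (ν-1)) * t := by
    rw [Real.rpow_sub ha, Real.rpow_one]; field_simp
  have e2 : a ^ ν * ((2 * min ν (1-ν)) * (t/a) ^ ((1:ℝ)/2))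
      = ((2 * min ν (1-ν)) * a ^ (ν - (1:ℝ)/2)) * t ^ ((1:ℝ)/2) := by
    rw [Real.div_rpow ht ha.le, Real.rpow_sub ha]
    field_simp
  calc t ^ ν = a ^ ν * (t/a) ^ ν := e0.symm
    _ ≤ a ^ ν * ((ν - min ν (1-ν)) * (t/a) + (1 - ν - min ν (1-ν))
        + (2 * min ν (1-ν)) * (t/a) ^ ((1:ℝ)/2)) := hmul
    _ = _ := by rw [mul_add, mul_add, e1, e2]; ring

set_option maxHeartbeats 1000000 in
private lemma rhm_combo_eq_cfc {H : Type*} [NormedAddCommGroup H] [InnerProductSpace ℂ H]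
    [CompleteSpace H] (A : H →L[ℂ] H) (hA : 0 ≤ A) (c₁ c₂ c₃ : ℝ) :
    c₁ • A + c₂ • (1 : H →L[ℂ] H) + c₃ • (A ^ ((1:ℝ)/2))
      = cfc (fun t : ℝ => c₁ * t + c₂ + c₃ * ((Real.toNNReal t ^ ((1:ℝ)/2) : ℝ≥0) : ℝ)) A := by
  have h2 : A ^ ((1:ℝ)/2) = cfc (fun t : ℝ => ((Real.toNNReal t ^ ((1:ℝ)/2) : ℝ≥0) : ℝ)) A := by
    rw [← CFC.rpow_eq_pow, CFC.rpow, cfc_nnreal_eq_real _ A hA]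
  have hcont : ContinuousOn (fun t : ℝ => ((Real.toNNReal t ^ ((1:ℝ)/2) : ℝ≥0) : ℝ))
      (spectrum ℝ A) := (rhm_cont_aux _ (by norm_num)).continuousOn
  symm
  rw [cfc_add A (fun t : ℝ => c₁ * t + c₂) (fun t : ℝ => c₃ * ((Real.toNNReal t ^ ((1:ℝ)/2) : ℝ≥0) : ℝ))
      (by fun_prop) (continuous_const.mul (rhm_cont_aux _ (by norm_num))).continuousOn,
    cfc_add A (fun t : ℝ => c₁ * t) (fun _ : ℝ => c₂) (by fun_prop) (by fun_prop),
    cfc_const_mul_id c₁ A, cfc_const c₂ A hA.isSelfAdjoint,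
    cfc_const_mul c₃ _ A hcont, ← h2, Algebra.algebraMap_eq_smul_one]

private lemma rhm_re_inner_smul {H : Type*} [NormedAddCommGroup H] [InnerProductSpace ℂ H]
    (c : ℝ) (x y : H) : (⟪x, c • y⟫_ℂ).re = c * (⟪x, y⟫_ℂ).re := by
  rw [RCLike.real_smul_eq_coe_smul (K := ℂ), inner_smul_right]
  simp

set_option maxHeartbeats 1000000 in
theorem refined_holder_mccarthy {H : Type*} [NormedAddCommGroup H] [InnerProductSpace ℂ H]
    [CompleteSpace H] (A : H →L[ℂ] H) (hA : 0 ≤ A) (x : H) (hx : ‖x‖ = 1)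
    (ν : ℝ) (hν : ν ∈ Set.Icc (0:ℝ) 1) (r : ℝ) (hr : r = min ν (1 - ν))
    (hAx : ⟪x, A x⟫_ℂ ≠ 0) :
    r * (1 - (⟪x, A x⟫_ℂ).re ^ (-(1:ℝ)/2) * (⟪x, (A ^ ((1:ℝ)/2)) x⟫_ℂ).re) ^ 2 ≤
      1 - (⟪x, A x⟫_ℂ).re ^ (-ν) * (⟪x, (A ^ ν) x⟫_ℂ).re := by
  obtain ⟨hν0, hν1⟩ := hν
  set B := A ^ ((1:ℝ)/2) with hBdef
  have hB0 : (0 : H →L[ℂ] H) ≤ B := CFC.rpow_nonneg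
  have hBsa : IsSelfAdjoint B := .of_nonneg hB0
  have hBsym := (ContinuousLinearMap.isSelfAdjoint_iff_isSymmetric).mp hBsa
  have hBB : B * B = A := by
    rw [hBdef, ← CFC.sqrt_eq_rpow]
    exact CFC.sqrt_mul_sqrt_self A hA
  have hAeq : ⟪x, A x⟫_ℂ = ((‖B x‖ ^ 2 : ℝ) : ℂ) := by
    rw [← hBB]
    calc ⟪x, (B * B) x⟫_ℂ = ⟪x, B (B x)⟫_ℂ := rfl
      _ = ⟪B x, B x⟫_ℂ := (hBsym x (B x)).symm
      _ = ((‖B x‖ ^ 2 : ℝ) : ℂ) := by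
          rw [inner_self_eq_norm_sq_to_K]; norm_cast
  set a := (⟪x, A x⟫_ℂ).re with ha_def
  have haeq : a = ‖B x‖ ^ 2 := by rw [ha_def, hAeq, Complex.ofReal_re]
  have ha0 : 0 < a := by
    rcases (norm_nonneg (B x)).lt_or_eq with h | h
    · rw [haeq]; positivity
    · exact absurd (by rw [hAeq, ← h]; simp) hAx
  set s := (⟪x, B x⟫_ℂ).re with hs_def
  have hs0 : 0 ≤ s := by
    simpa using ((ContinuousLinearMap.nonneg_iff_isPositive B).mp hB0).re_inner_nonneg_right x
  have hs_le : s ≤ a ^ ((1:ℝ)/2) := by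
    have h2 : a ^ ((1:ℝ)/2) = ‖B x‖ := by
      rw [haeq, ← Real.rpow_natCast ‖B x‖ 2, ← Real.rpow_mul (norm_nonneg _)]
      norm_num
    have h1 : s ≤ ‖B x‖ := by
      calc s ≤ ‖⟪x, B x⟫_ℂ‖ := Complex.re_le_norm _
        _ = ‖⟪x, B x⟫_ℂ‖ := rfl
        _ ≤ ‖x‖ * ‖B x‖ := norm_inner_le_norm x (B x)
        _ = ‖B x‖ := by rw [hx, one_mul]
    rw [h2]; exact h1
  -- the operator inequality
  set c₁ := (ν - min ν (1-ν)) * a ^ (ν-1) with hc₁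
  set c₂ := (1 - ν - min ν (1-ν)) * a ^ ν with hc₂
  set c₃ := (2 * min ν (1-ν)) * a ^ (ν - (1:ℝ)/2) with hc₃
  have hopL : A ^ ν = cfc (fun t : ℝ => ((Real.toNNReal t ^ ν : ℝ≥0) : ℝ)) A := by
    rw [← CFC.rpow_eq_pow, CFC.rpow, cfc_nnreal_eq_real _ A hA]
  have hop : A ^ ν ≤ c₁ • A + c₂ • (1 : H →L[ℂ] H) + c₃ • B := by
    rw [hopL, hBdef, rhm_combo_eq_cfc A hA]
    apply cfc_mono ?_ ((rhm_cont_aux ν hν0).continuousOn)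
      (((continuous_const.mul continuous_id').add continuous_const).add
        (continuous_const.mul (rhm_cont_aux _ (by norm_num)))).continuousOn
    intro t ht
    have ht0 : 0 ≤ t := spectrum_nonneg_of_nonneg hA ht
    have e : ∀ y : ℝ, ((Real.toNNReal t ^ y : ℝ≥0) : ℝ) = t ^ y := fun y => by
      rw [NNReal.coe_rpow, Real.coe_toNNReal t ht0]
    simp only [Pi.add_apply, Pi.mul_apply]
    rw [e, e]
    exact rhm_key_scalar2 hν0 hν1 ha0 ht0
  -- inner products
  have hpos := (ContinuousLinearMap.le_def _ _).mp hop
  have hinner : (0:ℝ) ≤ ((⟪x, (c₁ • A + c₂ • (1 : H →L[ℂ] H) + c₃ • B - A ^ ν) x⟫_ℂ)).re := by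
    exact hpos.re_inner_nonneg_right x
  set v := (⟪x, (A ^ ν) x⟫_ℂ).re with hv_def
  have hv : v ≤ c₁ * a + c₂ + c₃ * s := by
    have hexp : ((⟪x, (c₁ • A + c₂ • (1 : H →L[ℂ] H) + c₃ • B - A ^ ν) x⟫_ℂ)).re
        = c₁ * a + c₂ + c₃ * s - v := by
      simp only [ContinuousLinearMap.sub_apply, ContinuousLinearMap.add_apply,
        ContinuousLinearMap.smul_apply, ContinuousLinearMap.one_apply,
        inner_sub_right, inner_add_right, Complex.sub_re, Complex.add_re,
        rhm_re_inner_smul]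
      have hxx : (⟪x, x⟫_ℂ).re = 1 := by
        rw [inner_self_eq_norm_sq_to_K, hx]; norm_num
      rw [hxx, mul_one, ← ha_def, ← hs_def, ← hv_def]
    rw [hexp] at hinner
    linarith
  -- final real arithmetic
  have hr0 : 0 ≤ r := by rw [hr]; exact le_min hν0 (by linarith)
  have hap : ∀ p : ℝ, (0:ℝ) < a ^ p := fun p => Real.rpow_pos_of_pos ha0 p
  have hmul : ∀ p q : ℝ, a ^ p * a ^ q = a ^ (p+q) := fun p q => (Real.rpow_add ha0 p q).symm
  set δ := a ^ (-(1:ℝ)/2) * s with hδ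
  have hδ0 : 0 ≤ δ := mul_nonneg (hap _).le hs0
  have hδ1 : δ ≤ 1 := by
    calc δ ≤ a ^ (-(1:ℝ)/2) * a ^ ((1:ℝ)/2) := mul_le_mul_of_nonneg_left hs_le (hap _).le
      _ = 1 := by rw [hmul]; norm_num
  have hkey : a ^ (-ν) * v ≤ 1 - 2 * (min ν (1-ν)) * (1-δ) := by
    have h := mul_le_mul_of_nonneg_left hv (hap (-ν)).le
    have m1 : a ^ (-ν) * (a ^ (ν-1) * a) = 1 := by
      nth_rewrite 3 [← Real.rpow_one a]
      rw [hmul, hmul]; norm_num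
    have m2 : a ^ (-ν) * a ^ ν = 1 := by rw [hmul]; norm_num
    have m3 : a ^ (-ν) * a ^ (ν - (1:ℝ)/2) = a ^ (-(1:ℝ)/2) := by
      rw [hmul]; congr 1; ring
    have e1 : a ^ (-ν) * (c₁ * a + c₂ + c₃ * s)
        = (ν - min ν (1-ν)) + (1 - ν - min ν (1-ν)) + 2 * (min ν (1-ν)) * δ := by
      rw [hc₁, hc₂, hc₃, hδ]
      linear_combination (ν - min ν (1-ν)) * m1 + (1 - ν - min ν (1-ν)) * m2
        + 2 * (min ν (1-ν)) * s * m3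
    rw [e1] at h
    linarith
  rw [hr]
  have hm0 : 0 ≤ min ν (1-ν) := le_min hν0 (by linarith)
  have h1 : 0 ≤ (min ν (1-ν)) * (1-δ) * (1+δ) :=
    mul_nonneg (mul_nonneg hm0 (by linarith)) (by linarith)
  nlinarith [hkey, h1]
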